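/- Let μ be a probability measure on Ω × U with first marginal ℚ and conditional kernel π̂(ω,z) = dμ(ω,z)/dℚ(ω). Suppose π̂(ω,z) = π(ω,z) exp(⟨θ,z⟩ − Λ) h(T_zω)/h(ω) for a positive function h, and suppose ℚ is π̂-invariant. Then the relative entropy H(μ) := ∫ ∑_{z∈U} π̂(ω,z) log(π̂(ω,z)/π(ω,z)) dℚ(ω) equals ⟨θ, ξ_μ⟩ − Λ, where ξ_μ := ∫ ∑_{z∈U} π̂(ω,z) z dℚ(ω). -/

import Mathlib

open MeasureTheory
open scoped RealInnerProductSpace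

/-- If the kernel `π̂` is an h-transform of `π` and `Q` is `π̂`-invariant, then the
relative entropy `H(μ)` equals `⟨θ, ξ_μ⟩ - Λ`, where `ξ_μ` is the local drift. -/
theorem stmt14 {Ω U : Type*} [MeasurableSpace Ω] [Fintype U] {d : ℕ}
    (Q : Measure Ω) [IsProbabilityMeasure Q]
    (T : U → Ω → Ω) (v : U → EuclideanSpace ℝ (Fin d))
    (θ : EuclideanSpace ℝ (Fin d)) (Λ : ℝ)
    (π πh : Ω → U → ℝ) (h : Ω → ℝ)
    (hpos : ∀ ω, 0 < h ω) (hπpos : ∀ ω z, 0 < π ω z)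
    (hform : ∀ ω z, πh ω z = π ω z * Real.exp (⟪θ, v z⟫ - Λ) * h (T z ω) / h ω)
    (hker : ∀ᵐ ω ∂Q, ∑ z, πh ω z = 1)
    (hlogh : Integrable (fun ω => Real.log (h ω)) Q)
    (hinv : ∀ g : Ω → ℝ, Integrable g Q →
      ∫ ω, ∑ z, πh ω z * g (T z ω) ∂Q = ∫ ω, g ω ∂Q)
    (hentint : Integrable (fun ω => ∑ z, πh ω z * Real.log (πh ω z / π ω z)) Q)
    (hdriftint : Integrable (fun ω => ∑ z, πh ω z • v z) Q) :
    ∫ ω, ∑ z, πh ω z * Real.log (πh ω z / π ω z) ∂Q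
      = ⟪θ, ∫ ω, ∑ z, πh ω z • v z ∂Q⟫ - Λ := by
  -- pointwise computation of log(πh/π)
  have hlog : ∀ ω z, Real.log (πh ω z / π ω z)
      = (⟪θ, v z⟫ - Λ) + Real.log (h (T z ω)) - Real.log (h ω) := by
    intro ω z
    have h1 : πh ω z / π ω z
        = Real.exp (⟪θ, v z⟫ - Λ) * (h (T z ω) / h ω) := by
      rw [hform ω z]
      field_simp [(hπpos ω z).ne', (hpos ω).ne']
    rw [h1, Real.log_mul (Real.exp_ne_zero _)
        (div_ne_zero (hpos (T z ω)).ne' (hpos ω).ne'),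
      Real.log_exp, Real.log_div (hpos (T z ω)).ne' (hpos ω).ne']
    ring
  -- pointwise splitting of the entropy integrand
  have hsplit : ∀ ω, ∑ z, πh ω z * Real.log (πh ω z / π ω z)
      = (∑ z, πh ω z * ⟪θ, v z⟫) - Λ * (∑ z, πh ω z)
        + (∑ z, πh ω z * Real.log (h (T z ω)))
        - (∑ z, πh ω z) * Real.log (h ω) := by
    intro ω
    rw [Finset.mul_sum, Finset.sum_mul, ← Finset.sum_sub_distrib,
      ← Finset.sum_add_distrib, ← Finset.sum_sub_distrib]
    refine Finset.sum_congr rfl fun z _ => ?_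
    rw [hlog ω z]; ring
  have hg1eq : ∀ ω, (∑ z, πh ω z * ⟪θ, v z⟫) = ⟪θ, ∑ z, πh ω z • v z⟫ := by
    intro ω
    rw [inner_sum]
    exact Finset.sum_congr rfl fun z _ => (real_inner_smul_right θ (v z) (πh ω z)).symm
  -- integrability of the four pieces
  have hint1 : Integrable (fun ω => ∑ z, πh ω z * ⟪θ, v z⟫) Q := by
    have h0 : Integrable (fun ω => ⟪θ, ∑ z, πh ω z • v z⟫) Q :=
      (innerSL ℝ θ).integrable_comp hdriftint
    exact h0.congr (Filter.Eventually.of_forall fun ω => (hg1eq ω).symm)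
  have hint2 : Integrable (fun ω => Λ * ∑ z, πh ω z) Q := by
    refine (integrable_const Λ).congr ?_
    filter_upwards [hker] with ω hω
    simp [hω]
  have hint4 : Integrable (fun ω => (∑ z, πh ω z) * Real.log (h ω)) Q := by
    refine hlogh.congr ?_
    filter_upwards [hker] with ω hω
    simp [hω]
  have hint3 : Integrable (fun ω => ∑ z, πh ω z * Real.log (h (T z ω))) Q := by
    have heq : ∀ ω, (∑ z, πh ω z * Real.log (πh ω z / π ω z)) + Λ * (∑ z, πh ω z)
          + (∑ z, πh ω z) * Real.log (h ω) - (∑ z, πh ω z * ⟪θ, v z⟫)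
        = ∑ z, πh ω z * Real.log (h (T z ω)) := by
      intro ω; rw [hsplit ω]; ring
    exact (((hentint.add hint2).add hint4).sub hint1).congr
      (Filter.Eventually.of_forall fun ω => heq ω)
  have hAB : Integrable
      (fun ω => (∑ z, πh ω z * ⟪θ, v z⟫) - Λ * (∑ z, πh ω z)) Q := hint1.sub hint2
  have hABC : Integrable
      (fun ω => (∑ z, πh ω z * ⟪θ, v z⟫) - Λ * (∑ z, πh ω z)
        + (∑ z, πh ω z * Real.log (h (T z ω)))) Q := hAB.add hint3
  -- integrals of the pieces
  have i1 : ∫ ω, ∑ z, πh ω z * ⟪θ, v z⟫ ∂Q = ⟪θ, ∫ ω, ∑ z, πh ω z • v z ∂Q⟫ :=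
    (integral_congr_ae (Filter.Eventually.of_forall hg1eq)).trans
      (integral_inner hdriftint θ)
  have i2 : ∫ ω, Λ * ∑ z, πh ω z ∂Q = Λ := by
    have e : (fun ω => Λ * ∑ z, πh ω z) =ᵐ[Q] fun _ => Λ := by
      filter_upwards [hker] with ω hω; simp [hω]
    rw [integral_congr_ae e]; simp
  have i3 : ∫ ω, ∑ z, πh ω z * Real.log (h (T z ω)) ∂Q
      = ∫ ω, Real.log (h ω) ∂Q := hinv (fun ω => Real.log (h ω)) hlogh
  have i4 : ∫ ω, (∑ z, πh ω z) * Real.log (h ω) ∂Q = ∫ ω, Real.log (h ω) ∂Q := by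
    refine integral_congr_ae ?_
    filter_upwards [hker] with ω hω
    simp [hω]
  -- split the integral
  have s1 : ∫ ω, ((∑ z, πh ω z * ⟪θ, v z⟫) - Λ * (∑ z, πh ω z)
        + (∑ z, πh ω z * Real.log (h (T z ω)))
        - (∑ z, πh ω z) * Real.log (h ω)) ∂Q
      = (∫ ω, ((∑ z, πh ω z * ⟪θ, v z⟫) - Λ * (∑ z, πh ω z)
          + (∑ z, πh ω z * Real.log (h (T z ω)))) ∂Q)
        - ∫ ω, (∑ z, πh ω z) * Real.log (h ω) ∂Q := integral_sub hABC hint4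
  have s2 : ∫ ω, ((∑ z, πh ω z * ⟪θ, v z⟫) - Λ * (∑ z, πh ω z)
        + (∑ z, πh ω z * Real.log (h (T z ω)))) ∂Q
      = (∫ ω, ((∑ z, πh ω z * ⟪θ, v z⟫) - Λ * (∑ z, πh ω z)) ∂Q)
        + ∫ ω, ∑ z, πh ω z * Real.log (h (T z ω)) ∂Q := integral_add hAB hint3
  have s3 : ∫ ω, ((∑ z, πh ω z * ⟪θ, v z⟫) - Λ * (∑ z, πh ω z)) ∂Q
      = (∫ ω, ∑ z, πh ω z * ⟪θ, v z⟫ ∂Q) - ∫ ω, Λ * ∑ z, πh ω z ∂Q :=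
    integral_sub hint1 hint2
  rw [integral_congr_ae (Filter.Eventually.of_forall hsplit), s1, s2, s3,
    i1, i2, i3, i4]
  ring
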